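/- For 0 < α ≤ π/4, let R_A = (2 − sin²α)|0⟩⟨0| + (1 + sec²α)|1⟩⟨1|. Then tr_A[P_α (R_A ⊗ I)] = ((1+sec²α)sin²α/(1+sin²α))|0⟩⟨0| + |1⟩⟨1| + ((1+sec²α)cos²α/(1+cos²α))|2⟩⟨2| ≤ I₃, and tr R_A = 2 + cos²α + sec²α. Hence R_A is feasible for the primal quantum fractional packing SDP with value 2 + cos²α + sec²α. -/

import Mathlib

open Matrix Kronecker Complex ComplexOrder

noncomputable section

abbrev M3 : Type := Matrix (Fin 3) (Fin 3) ℂ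
abbrev M9 : Type := Matrix (Fin 3 × Fin 3) (Fin 3 × Fin 3) ℂ

/-- |i⟩⟨j| on ℂ³ -/
def ket (i j : Fin 3) : M3 := Matrix.single i j 1

def E (α : ℝ) : M3 := (Real.sin α : ℂ) • ket 0 1 + ket 1 2
def D (α : ℝ) : M3 := (Real.cos α : ℂ) • ket 2 1 + ket 1 0

def u (α : ℝ) : Fin 3 × Fin 3 → ℂ := fun p =>
  (((if p = (1,0) then Real.sin α else 0) + (if p = (2,1) then 1 else 0)) /
    Real.sqrt (1 + Real.sin α ^ 2) : ℝ)

def v (α : ℝ) : Fin 3 × Fin 3 → ℂ := fun p =>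
  (((if p = (1,2) then Real.cos α else 0) + (if p = (0,1) then 1 else 0)) /
    Real.sqrt (1 + Real.cos α ^ 2) : ℝ)

/-- Projection onto span{|u_α⟩, |v_α⟩}, the support of the Choi matrix of N_α. -/
def Pproj (α : ℝ) : M9 :=
  vecMulVec (u α) (star (u α)) + vecMulVec (v α) (star (v α))

/-- Partial trace over the first (A) factor. -/
def trA (M : M9) : M3 := fun i j => ∑ k, M (k, i) (k, j)

/-- Partial trace over the second (B) factor. -/
def trB (M : M9) : M3 := fun i j => ∑ k, M (i, k) (j, k)

def RA (α : ℝ) : M3 :=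
  ((2 - Real.sin α ^ 2 : ℝ) : ℂ) • ket 0 0 + ((1 + 1 / Real.cos α ^ 2 : ℝ) : ℂ) • ket 1 1

def Dmat (α : ℝ) : M3 :=
  (((1 + 1 / Real.cos α ^ 2) * Real.sin α ^ 2 / (1 + Real.sin α ^ 2) : ℝ) : ℂ) • ket 0 0 +
  ket 1 1 +
  (((1 + 1 / Real.cos α ^ 2) * Real.cos α ^ 2 / (1 + Real.cos α ^ 2) : ℝ) : ℂ) • ket 2 2

lemma aux_inv (x : ℂ) (hx : x ≠ 0) (hx1 : 1 + x ^ 2 ≠ 0) :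
    1 - (1 + (x ^ 2)⁻¹) * x ^ 2 / (1 + x ^ 2) = 0 := by
  have h : (1 + (x ^ 2)⁻¹) * x ^ 2 = 1 + x ^ 2 := by
    field_simp
    ring
  rw [h, div_self hx1, sub_self]

theorem packing_primal_feasible (α : ℝ) (hα : 0 < α) (hα' : α ≤ Real.pi / 4) :
    trA (Pproj α * (RA α ⊗ₖ (1 : M3))) = Dmat α ∧
    ((1 : M3) - Dmat α).PosSemidef ∧
    (RA α).trace = ((2 + Real.cos α ^ 2 + 1 / Real.cos α ^ 2 : ℝ) : ℂ) := by
  have hpi := Real.pi_pos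
  have hcpos : 0 < Real.cos α := by
    apply Real.cos_pos_of_mem_Ioo
    constructor <;> [linarith; linarith]
  have hcos : Real.cos α ≠ 0 := ne_of_gt hcpos
  have hc2 : Real.cos α ^ 2 ≠ 0 := pow_ne_zero _ hcos
  have hc2pos : 0 < Real.cos α ^ 2 := by positivity
  have hs : Real.sqrt (1 + Real.sin α ^ 2) * Real.sqrt (1 + Real.sin α ^ 2)
      = 1 + Real.sin α ^ 2 := Real.mul_self_sqrt (by positivity)
  have hc : Real.sqrt (1 + Real.cos α ^ 2) * Real.sqrt (1 + Real.cos α ^ 2)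
      = 1 + Real.cos α ^ 2 := Real.mul_self_sqrt (by positivity)
  have hs0 : (1 : ℝ) + Real.sin α ^ 2 ≠ 0 := by positivity
  have hc0 : (1 : ℝ) + Real.cos α ^ 2 ≠ 0 := by positivity
  have hpyth := Real.sin_sq_add_cos_sq α
  have hp : ((Real.sin α : ℂ)) ^ 2 + ((Real.cos α : ℂ)) ^ 2 = 1 := by
    rw [← Complex.ofReal_pow, ← Complex.ofReal_pow, ← Complex.ofReal_add,
      Real.sin_sq_add_cos_sq, Complex.ofReal_one]
  have hcosC : (Real.cos α : ℂ) ≠ 0 := Complex.ofReal_ne_zero.mpr hcos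
  have hc0C : (1 : ℂ) + (Real.cos α : ℂ) ^ 2 ≠ 0 := by
    rw [← Complex.ofReal_one, ← Complex.ofReal_pow, ← Complex.ofReal_add]
    exact Complex.ofReal_ne_zero.mpr hc0
  refine ⟨?_, ?_, ?_⟩
  · ext i j
    fin_cases i <;> fin_cases j <;>
      simp [trA, Pproj, RA, Dmat, ket, u, v, Matrix.mul_apply, Matrix.one_apply,
        vecMulVec_apply, Fintype.sum_prod_type, Fin.sum_univ_three,
        Matrix.single, ← Complex.ofReal_mul,
        ← Complex.ofReal_add, div_mul_div_comm, hs, hc,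
        -Complex.ofReal_sin, -Complex.ofReal_cos] <;>
      first
        | (rw [div_mul_eq_mul_div, ← Complex.ofReal_mul]
           congr 1
           exact Complex.ofReal_inj.mpr (by ring))
        | (rw [show (2 : ℂ) - (Real.sin α : ℂ) ^ 2 = ((1 + Real.cos α ^ 2 : ℝ) : ℂ) from by
             push_cast [-Complex.ofReal_sin, -Complex.ofReal_cos]
             linear_combination -hp,
           inv_mul_cancel₀ (Complex.ofReal_ne_zero.mpr hc0)])
  · have hle : Real.sin α ^ 2 ≤ Real.cos α ^ 2 := by
      have h2 := Real.cos_two_mul α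
      have h3 : 0 ≤ Real.cos (2 * α) := by
        apply Real.cos_nonneg_of_mem_Icc
        constructor <;> [linarith; linarith]
      nlinarith [hpyth]
    have hd : (1 : M3) - Dmat α = Matrix.diagonal
        ![((1 - (1 + 1 / Real.cos α ^ 2) * Real.sin α ^ 2 / (1 + Real.sin α ^ 2) : ℝ) : ℂ),
          0, 0] := by
      ext i j
      fin_cases i <;> fin_cases j <;>
        simp [Dmat, ket, Matrix.one_apply, Matrix.single, Matrix.diagonal,
          -Complex.ofReal_sin, -Complex.ofReal_cos] <;>
        exact aux_inv _ hcosC hc0C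
    rw [hd]
    refine Matrix.posSemidef_diagonal_iff.mpr fun i => ?_
    have hnn : (0 : ℝ) ≤ 1 - (1 + 1 / Real.cos α ^ 2) * Real.sin α ^ 2 / (1 + Real.sin α ^ 2) := by
      rw [sub_nonneg, div_le_one (by positivity)]
      have h1 : Real.sin α ^ 2 / Real.cos α ^ 2 ≤ 1 := by
        rw [div_le_one hc2pos]; exact hle
      have h3 : (1 + 1 / Real.cos α ^ 2) * Real.sin α ^ 2
          = Real.sin α ^ 2 + Real.sin α ^ 2 / Real.cos α ^ 2 := by ring
      linarith
    fin_cases i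
    · exact Complex.zero_le_real.mpr hnn
    · exact le_refl 0
    · exact le_refl 0
  · simp [RA, ket, Matrix.trace, Matrix.diag, Matrix.single, Fin.sum_univ_three,
      -Complex.ofReal_sin, -Complex.ofReal_cos]
    linear_combination -hp
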